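/- Suppose the linear inverse-problem setup and accuracy assumptions hold and there exists a collection X̃ ⊂ X̂ of points satisfying the semi-strong source condition such that the union of the corresponding neighbourhoods U^{x̂} over x̂ ∈ X̃ covers X̂. Suppose further that U_ρ := {x ∈ X : ‖A(x − x̂)‖ ≤ ρ, R(x) ≤ R(x̂) + ρ} is weakly (or weakly-*) compact for some ρ > 0 and each U^{x̂}, x̂ ∈ X̃, is correspondingly weakly (or weakly-*) open. If (α_δ², δ², e_δ)/min{α_δ, γ_δ} → 0 as δ ↘ 0, then dist(x_δ, X̂) → 0 as δ ↘ 0. -/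

import Mathlib

open scoped RealInnerProductSpace
open Filter Topology Metric

private lemma weakClosed_of_convex_closed {X : Type*} [NormedAddCommGroup X] [NormedSpace ℝ X]
    {s : Set X} (hc : Convex ℝ s) (hcl : IsClosed s) : IsClosed (toWeakSpace ℝ X '' s) := by
  have h := hc.toWeakSpace_closure (𝕜 := ℝ)
  rw [hcl.closure_eq] at h
  rw [h]; exact isClosed_closure

private lemma clusterPt_frequently' {Z : Type*} [TopologicalSpace Z] {y : Z} {F : Filter Z}
    (h : ClusterPt y F) {V : Set Z} (hV : V ∈ nhds y) : ∃ᶠ z in F, z ∈ V := by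
  rw [clusterPt_iff_nonempty] at h
  rw [frequently_iff]
  intro W hW
  obtain ⟨z, hz1, hz2⟩ := h hV hW
  exact ⟨z, hz2, hz1⟩

private lemma clusterPt_mem_closed' {Z : Type*} [TopologicalSpace Z] {y : Z} {F : Filter Z}
    (h : ClusterPt y F) {C : Set Z} (hC : IsClosed C) (hmem : C ∈ F) : y ∈ C := by
  have : ClusterPt y (𝓟 C) := h.mono (le_principal_iff.mpr hmem)
  exact hC.closure_eq ▸ mem_closure_iff_clusterPt.mpr this

private lemma ereal_le_of_forall_lt {a : EReal} {b : ℝ}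
    (h : ∀ η : ℝ, 0 < η → a ≤ ((b + η : ℝ) : EReal)) : a ≤ (b : EReal) := by
  induction a using EReal.rec with
  | bot => exact bot_le
  | coe r =>
    norm_cast
    refine le_of_forall_pos_le_add fun η hη => ?_
    exact_mod_cast h η hη
  | top =>
    exfalso
    simpa using lt_of_le_of_lt (h 1 one_pos) (EReal.coe_lt_top _)

set_option maxHeartbeats 2000000 in
/-- **Convergence to the solution set under semi-strong source conditions**
(Theorem `thm:linear:subreg:weak`).  In the linear inverse-problem setting,
let `X̂` be the set of points satisfying the basic source condition, and
suppose there is a collection `X̃ ⊆ X̂` of points, each satisfying the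
semi-strong source condition with its own `ŵ`, factor `γ` and (δ-independent)
neighbourhood `U^{x̂}`, such that the neighbourhoods cover `X̂`.  Suppose
moreover that `U_ρ` is weakly compact for some `ρ > 0` and each `U^{x̂}` is
weakly open.  If `(α_δ², δ², e_δ)/min{α_δ, γ_δ} → 0` as `δ ↘ 0`, then
`dist(x_δ, X̂) → 0` as `δ ↘ 0`. -/
theorem semi_strong_source_condition_convergence
    {X Y : Type*} [NormedAddCommGroup X] [NormedSpace ℝ X] [CompleteSpace X]
    [NormedAddCommGroup Y] [InnerProductSpace ℝ Y] [CompleteSpace Y]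
    (A : X →L[ℝ] Y) (R : X → EReal)
    (hconv : ∀ p q : X, ∀ t : ℝ, 0 ≤ t → t ≤ 1 →
      R (t • p + (1 - t) • q) ≤ (t : EReal) * R p + ((1 - t : ℝ) : EReal) * R q)
    (hproper : ∃ p, R p ≠ ⊤) (hnebot : ∀ p, R p ≠ ⊥)
    (hlsc : LowerSemicontinuous R)
    (bhat : Y) (b : ℝ → Y) (hb : ∀ δ : ℝ, 0 < δ → ‖b δ - bhat‖ ≤ δ)
    (α e : ℝ → ℝ) (hα : ∀ δ : ℝ, 0 < δ → 0 < α δ) (he : ∀ δ : ℝ, 0 < δ → 0 ≤ e δ)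
    (γΔ : ℝ → ℝ) (hγΔ : ∀ δ : ℝ, 0 < δ → 0 < γΔ δ)
    (x : ℝ → X)
    -- the set X̂ of solutions satisfying the basic source condition
    (Xhat : Set X)
    (hXhat : Xhat = {z : X | A z = bhat ∧
      ∃ w : Y, ∀ v : X, R z + ((-⟪w, A (v - z)⟫ : ℝ) : EReal) ≤ R v})
    -- accuracy of the approximate solutions
    (hacc : ∀ δ : ℝ, 0 < δ → ∀ xh ∈ Xhat,
      ((2⁻¹ * ‖A (x δ) - b δ‖ ^ 2 : ℝ) : EReal) + (α δ : EReal) * R (x δ)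
        ≤ ((2⁻¹ * ‖A xh - b δ‖ ^ 2 : ℝ) : EReal) + (α δ : EReal) * R xh
          + (e δ : EReal))
    -- the collection X̃ ⊆ X̂ of points satisfying the semi-strong source
    -- condition, with neighbourhoods U^{x̂} covering X̂
    (Xtilde : Set X) (hXtilde : Xtilde ⊆ Xhat)
    (U : X → Set X)
    (hcover : Xhat ⊆ ⋃ xh ∈ Xtilde, U xh)
    (hsemi : ∀ xh ∈ Xtilde, U xh ∈ nhds xh ∧
      ∃ (w : Y) (γ : ℝ), 0 < γ ∧
        (∀ v : X, R xh + ((-⟪w, A (v - xh)⟫ : ℝ) : EReal) ≤ R v) ∧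
        ∀ δ : ℝ, 0 < δ → ∀ z ∈ U xh,
          ((2⁻¹ * ‖A xh - b δ‖ ^ 2 + ⟪A xh - b δ - α δ • w, A (z - xh)⟫
              + γ * ‖A (z - xh)‖ ^ 2 + γ * γΔ δ * infDist z Xhat ^ 2 : ℝ) : EReal)
              + (α δ : EReal) * R xh
            ≤ ((2⁻¹ * ‖A z - b δ‖ ^ 2 : ℝ) : EReal) + (α δ : EReal) * R z)
    -- weak compactness of U_ρ and weak openness of the neighbourhoods U^{x̂}
    (ρ : ℝ) (hρ : 0 < ρ) (xh₀ : X) (hxh₀ : xh₀ ∈ Xhat)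
    (hUρcpt : IsCompact (toWeakSpace ℝ X ''
      {z : X | ‖A (z - xh₀)‖ ≤ ρ ∧ R z ≤ R xh₀ + (ρ : EReal)}))
    (hUopen : ∀ xh ∈ Xtilde, IsOpen (toWeakSpace ℝ X '' U xh))
    -- parameter convergence: (α_δ², δ², e_δ)/min{α_δ, γ_δ} → 0
    (hlim1 : Tendsto (fun δ => α δ ^ 2 / min (α δ) (γΔ δ)) (nhdsWithin 0 (Set.Ioi 0)) (nhds 0))
    (hlim2 : Tendsto (fun δ => δ ^ 2 / min (α δ) (γΔ δ)) (nhdsWithin 0 (Set.Ioi 0)) (nhds 0))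
    (hlim3 : Tendsto (fun δ => e δ / min (α δ) (γΔ δ)) (nhdsWithin 0 (Set.Ioi 0)) (nhds 0)) :
    Tendsto (fun δ => infDist (x δ) Xhat) (nhdsWithin 0 (Set.Ioi 0)) (nhds 0) := by
  classical
  set m : ℝ → ℝ := fun δ => min (α δ) (γΔ δ) with hm_def
  have hm_pos : ∀ δ : ℝ, 0 < δ → 0 < m δ := fun δ hδ => lt_min (hα δ hδ) (hγΔ δ hδ)
  have hm_le_α : ∀ δ : ℝ, m δ ≤ α δ := fun δ => min_le_left _ _
  have hm_le_γ : ∀ δ : ℝ, m δ ≤ γΔ δ := fun δ => min_le_right _ _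
  have hpos : ∀ᶠ δ in 𝓝[>] (0:ℝ), 0 < δ := eventually_mem_nhdsWithin
  -- R is real-valued on Xhat
  have hRXhat : ∀ xh ∈ Xhat, ∃ r : ℝ, R xh = (r : EReal) := by
    intro xh hxh
    rw [hXhat] at hxh
    obtain ⟨-, w, hw⟩ := hxh
    refine ⟨(R xh).toReal, ((R xh).coe_toReal ?_ (hnebot xh)).symm⟩
    intro htop
    obtain ⟨p, hp⟩ := hproper
    have h1 := hw p
    rw [htop, EReal.top_add_of_ne_bot (by simp)] at h1
    exact hp (top_le_iff.mp h1)
  obtain ⟨r₀, hr₀⟩ := hRXhat xh₀ hxh₀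
  have hxh₀' := hxh₀
  rw [hXhat] at hxh₀'
  obtain ⟨hA0, w₀, hw₀⟩ := hxh₀'
  -- R is real-valued on the iterates
  have hRx : ∀ δ : ℝ, 0 < δ → ∃ r : ℝ, R (x δ) = (r : EReal) := by
    intro δ hδ
    refine ⟨(R (x δ)).toReal, ((R (x δ)).coe_toReal ?_ (hnebot _)).symm⟩
    intro htop
    have h1 := hacc δ hδ xh₀ hxh₀
    rw [htop, hr₀, EReal.coe_mul_top_of_pos (by exact_mod_cast hα δ hδ),
      EReal.add_top_of_ne_bot (EReal.coe_ne_bot _)] at h1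
    have h2 : ((2⁻¹ * ‖A xh₀ - b δ‖ ^ 2 : ℝ) : EReal) + (α δ : EReal) * (r₀ : EReal)
        + (e δ : EReal) = ((2⁻¹ * ‖A xh₀ - b δ‖ ^ 2 + α δ * r₀ + e δ : ℝ) : EReal) := by
      push_cast; ring
    rw [h2] at h1
    simpa using lt_of_le_of_lt h1 (EReal.coe_lt_top _)
  set r : ℝ → ℝ := fun δ => (R (x δ)).toReal with hr_def
  have hrx : ∀ δ : ℝ, 0 < δ → R (x δ) = ((r δ : ℝ) : EReal) := by
    intro δ hδ
    obtain ⟨rr, hrr⟩ := hRx δ hδ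
    rw [hrr]; simp [hr_def, hrr]
  -- real form of the accuracy estimate
  have hacc' : ∀ δ : ℝ, 0 < δ → ∀ xh ∈ Xhat, ∀ rh : ℝ, R xh = (rh : EReal) →
      2⁻¹ * ‖A (x δ) - b δ‖ ^ 2 + α δ * r δ
        ≤ 2⁻¹ * ‖A xh - b δ‖ ^ 2 + α δ * rh + e δ := by
    intro δ hδ xh hxh rh hrh
    have h1 := hacc δ hδ xh hxh
    rw [hrh, hrx δ hδ] at h1
    exact_mod_cast h1
  -- basic source-condition inequality in real form, at the iterates
  have hsrc₀ : ∀ δ : ℝ, 0 < δ → r₀ - ⟪w₀, A (x δ - xh₀)⟫ ≤ r δ := by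
    intro δ hδ
    have h1 := hw₀ (x δ)
    rw [hr₀, hrx δ hδ] at h1
    have h2 : ((r₀ - ⟪w₀, A (x δ - xh₀)⟫ : ℝ) : EReal) ≤ ((r δ : ℝ) : EReal) := by
      rw [show ((r₀ - ⟪w₀, A (x δ - xh₀)⟫ : ℝ) : EReal)
        = (r₀ : EReal) + ((-⟪w₀, A (x δ - xh₀)⟫ : ℝ) : EReal) by
          push_cast; rw [sub_eq_add_neg]]
      exact h1
    exact_mod_cast h2
  -- basic norm estimates
  have hAxh₀ : ∀ δ : ℝ, 0 < δ → ‖A xh₀ - b δ‖ ≤ δ := by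
    intro δ hδ
    rw [hA0, ← norm_neg]
    simpa using hb δ hδ
  have hnle : ∀ δ : ℝ, 0 < δ → ‖A (x δ - xh₀)‖ ≤ ‖A (x δ) - b δ‖ + δ := by
    intro δ hδ
    have : A (x δ - xh₀) = (A (x δ) - b δ) + (b δ - bhat) := by
      rw [map_sub, hA0]; abel
    rw [this]
    exact (norm_add_le _ _).trans (by linarith [hb δ hδ])
  -- Step 1: key estimate on the residual
  have hqsq : ∀ δ : ℝ, 0 < δ →
      ‖A (x δ) - b δ‖ ^ 2 ≤ 4 * δ ^ 2 + 6 * ‖w₀‖ ^ 2 * α δ ^ 2 + 4 * e δ := by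
    intro δ hδ
    have h1 := hacc' δ hδ xh₀ hxh₀ r₀ hr₀
    have h2 := hsrc₀ δ hδ
    have h3 : ⟪w₀, A (x δ - xh₀)⟫ ≤ ‖w₀‖ * (‖A (x δ) - b δ‖ + δ) :=
      (real_inner_le_norm _ _).trans
        (mul_le_mul_of_nonneg_left (hnle δ hδ) (norm_nonneg _))
    have h4 : ‖A xh₀ - b δ‖ ^ 2 ≤ δ ^ 2 :=
      pow_le_pow_left₀ (norm_nonneg _) (hAxh₀ δ hδ) 2
    have hαpos := hα δ hδ
    have hq0 : (0:ℝ) ≤ ‖A (x δ) - b δ‖ := norm_nonneg _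
    have hW0 : (0:ℝ) ≤ ‖w₀‖ := norm_nonneg _
    nlinarith [sq_nonneg (‖A (x δ) - b δ‖ - 2 * α δ * ‖w₀‖), sq_nonneg (α δ * ‖w₀‖ - δ),
      mul_le_mul_of_nonneg_left h3 hαpos.le, mul_nonneg hαpos.le hW0]
  -- Step 1': bound on r δ
  have hrbound : ∀ δ : ℝ, 0 < δ → r δ ≤ r₀ + (2⁻¹ * δ ^ 2 + e δ) / m δ := by
    intro δ hδ
    have h1 := hacc' δ hδ xh₀ hxh₀ r₀ hr₀
    have h4 : ‖A xh₀ - b δ‖ ^ 2 ≤ δ ^ 2 :=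
      pow_le_pow_left₀ (norm_nonneg _) (hAxh₀ δ hδ) 2
    have hαδ := hα δ hδ
    have hmδ := hm_pos δ hδ
    have h5 : α δ * (r δ - r₀) ≤ 2⁻¹ * δ ^ 2 + e δ := by
      nlinarith [sq_nonneg ‖A (x δ) - b δ‖]
    have h6 : m δ * (r δ - r₀) ≤ 2⁻¹ * δ ^ 2 + e δ := by
      rcases le_or_gt r₀ (r δ) with hc | hc
      · have := mul_le_mul_of_nonneg_right (hm_le_α δ) (by linarith : (0:ℝ) ≤ r δ - r₀)
        linarith
      · nlinarith [he δ hδ, sq_nonneg δ]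
    rw [← sub_le_iff_le_add']
    rw [le_div_iff₀ hmδ]
    linarith [h6]
  -- limits
  have hδ0 : Tendsto (fun δ : ℝ => δ) (𝓝[>] 0) (𝓝 0) :=
    tendsto_id.mono_left nhdsWithin_le_nhds
  have hδ20 : Tendsto (fun δ : ℝ => δ ^ 2) (𝓝[>] 0) (𝓝 0) := by
    have := hδ0.mul hδ0; simpa [pow_two] using this
  have hα0 : Tendsto α (𝓝[>] 0) (𝓝 0) := by
    refine squeeze_zero' (hpos.mono fun δ hδ => (hα δ hδ).le) ?_ hlim1
    refine hpos.mono fun δ hδ => ?_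
    rw [le_div_iff₀ (hm_pos δ hδ)]
    nlinarith [hm_le_α δ, hα δ hδ, hm_pos δ hδ]
  have hα20 : Tendsto (fun δ => α δ ^ 2) (𝓝[>] 0) (𝓝 0) := by
    have := hα0.mul hα0; simpa [pow_two] using this
  have hm0 : Tendsto m (𝓝[>] 0) (𝓝 0) :=
    squeeze_zero' (hpos.mono fun δ hδ => (hm_pos δ hδ).le)
      (Eventually.of_forall fun δ => hm_le_α δ) hα0
  have he0 : Tendsto e (𝓝[>] 0) (𝓝 0) := by
    have h1 : Tendsto (fun δ => e δ / m δ * m δ) (𝓝[>] 0) (𝓝 0) := by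
      simpa using hlim3.mul hm0
    refine h1.congr' (hpos.mono fun δ hδ => ?_)
    exact div_mul_cancel₀ _ (hm_pos δ hδ).ne'
  -- the residual tends to zero
  have hq20 : Tendsto (fun δ => ‖A (x δ) - b δ‖ ^ 2) (𝓝[>] 0) (𝓝 0) := by
    refine squeeze_zero' (hpos.mono fun δ _ => sq_nonneg _)
      (hpos.mono fun δ hδ => hqsq δ hδ) ?_
    have : Tendsto (fun δ => 4 * δ ^ 2 + 6 * ‖w₀‖ ^ 2 * α δ ^ 2 + 4 * e δ)
        (𝓝[>] 0) (𝓝 (4 * 0 + 6 * ‖w₀‖ ^ 2 * 0 + 4 * 0)) :=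
      ((hδ20.const_mul 4).add (hα20.const_mul _)).add (he0.const_mul 4)
    simpa using this
  have hq0 : Tendsto (fun δ => ‖A (x δ) - b δ‖) (𝓝[>] 0) (𝓝 0) := by
    have h1 : Tendsto (fun δ => Real.sqrt (‖A (x δ) - b δ‖ ^ 2)) (𝓝[>] 0) (𝓝 (Real.sqrt 0)) :=
      (Real.continuous_sqrt.tendsto 0).comp hq20
    rw [Real.sqrt_zero] at h1
    refine h1.congr fun δ => ?_
    rw [Real.sqrt_sq (norm_nonneg _)]
  have hn0 : Tendsto (fun δ => ‖A (x δ - xh₀)‖) (𝓝[>] 0) (𝓝 0) := by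
    refine squeeze_zero' (hpos.mono fun δ _ => norm_nonneg _)
      (hpos.mono fun δ hδ => hnle δ hδ) (by simpa using hq0.add hδ0)
  -- g bound tends to zero
  have hg0 : Tendsto (fun δ => (2⁻¹ * δ ^ 2 + e δ) / m δ) (𝓝[>] 0) (𝓝 0) := by
    have h1 : Tendsto (fun δ => 2⁻¹ * (δ ^ 2 / m δ) + e δ / m δ) (𝓝[>] 0) (𝓝 (2⁻¹ * 0 + 0)) :=
      (hlim2.const_mul _).add hlim3
    rw [mul_zero, zero_add] at h1
    refine h1.congr fun δ => ?_
    rw [add_div, mul_div_assoc]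
  -- eventually the iterates are in sublevel sets of R
  have hrev : ∀ η : ℝ, 0 < η → ∀ᶠ δ in 𝓝[>] (0:ℝ), r δ ≤ r₀ + η := by
    intro η hη
    filter_upwards [hpos, hg0.eventually_lt_const hη] with δ hδ hgη
    linarith [hrbound δ hδ]
  -- contradiction setup
  by_contra hcon
  rw [Metric.tendsto_nhds] at hcon
  push_neg at hcon
  obtain ⟨ε, hε, hfreq⟩ := hcon
  have hfreq' : ∃ᶠ δ in 𝓝[>] (0:ℝ), δ ∈ {δ : ℝ | ε ≤ infDist (x δ) Xhat} := by
    refine hfreq.mono fun δ hδ => ?_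
    have : dist (infDist (x δ) Xhat) 0 = infDist (x δ) Xhat := by
      rw [Real.dist_eq, sub_zero, abs_of_nonneg (infDist_nonneg)]
    rw [this] at hδ
    exact hδ
  set S : Set ℝ := {δ : ℝ | ε ≤ infDist (x δ) Xhat} with hS_def
  set L : Filter ℝ := 𝓝[>] (0:ℝ) ⊓ 𝓟 S with hL_def
  have hLne : L.NeBot := by
    rw [hL_def]
    exact frequently_iff_neBot.mp hfreq'
  have hLle : L ≤ 𝓝[>] (0:ℝ) := inf_le_left
  have hLS : ∀ᶠ δ in L, δ ∈ S := by
    rw [hL_def, eventually_inf_principal]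
    exact Eventually.of_forall fun δ hδ => hδ
  set F : Filter (WeakSpace ℝ X) := Filter.map (fun δ => toWeakSpace ℝ X (x δ)) L with hF_def
  have hFne : F.NeBot := Filter.map_neBot
  -- eventually in the compact set
  have hevK : ∀ᶠ δ in 𝓝[>] (0:ℝ),
      x δ ∈ {z : X | ‖A (z - xh₀)‖ ≤ ρ ∧ R z ≤ R xh₀ + (ρ : EReal)} := by
    filter_upwards [hpos, hn0.eventually_le_const hρ, hrev ρ hρ] with δ hδ h1 h2
    refine ⟨h1, ?_⟩
    rw [hrx δ hδ, hr₀]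
    exact_mod_cast h2
  have hFK : F ≤ 𝓟 (toWeakSpace ℝ X ''
      {z : X | ‖A (z - xh₀)‖ ≤ ρ ∧ R z ≤ R xh₀ + (ρ : EReal)}) := by
    rw [le_principal_iff, hF_def, mem_map]
    exact hLle ((hevK.mono fun δ hδ => Set.mem_image_of_mem _ hδ) :)
  obtain ⟨y, hyK, hyc⟩ := hUρcpt.exists_clusterPt hFK
  obtain ⟨xs, hxsK, rfl⟩ := hyK
  -- membership criterion in weakly closed sets
  have hmemC : ∀ C : Set X, Convex ℝ C → IsClosed C →
      (∀ᶠ δ in 𝓝[>] (0:ℝ), x δ ∈ C) → xs ∈ C := by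
    intro C hCc hCcl hev
    have h1 : toWeakSpace ℝ X '' C ∈ F := by
      rw [hF_def, mem_map]
      exact hLle ((hev.mono fun δ hδ => Set.mem_image_of_mem _ hδ) :)
    have h2 := clusterPt_mem_closed' hyc (weakClosed_of_convex_closed hCc hCcl) h1
    obtain ⟨z, hz, hz2⟩ := h2
    rwa [← (toWeakSpace ℝ X).injective hz2]
  -- A xs = bhat
  have hAxs : A xs = bhat := by
    have h1 : ∀ η : ℝ, 0 < η → ‖A (xs - xh₀)‖ ≤ η := by
      intro η hη
      refine hmemC {z : X | ‖A (z - xh₀)‖ ≤ η} ?_ ?_ ?_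
      · intro z hz z' hz' a c ha hc hac
        simp only [Set.mem_setOf_eq] at *
        have hc' : c = 1 - a := by linarith
        subst hc'
        have heq : a • z + (1 - a) • z' - xh₀ = a • (z - xh₀) + (1 - a) • (z' - xh₀) := by
          module
        rw [heq, map_add, map_smul, map_smul]
        calc ‖a • A (z - xh₀) + (1 - a) • A (z' - xh₀)‖
            ≤ ‖a • A (z - xh₀)‖ + ‖(1 - a) • A (z' - xh₀)‖ := norm_add_le _ _
          _ = a * ‖A (z - xh₀)‖ + (1 - a) * ‖A (z' - xh₀)‖ := by
              rw [norm_smul, norm_smul, Real.norm_of_nonneg ha, Real.norm_of_nonneg hc]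
          _ ≤ a * η + (1 - a) * η := by
              exact add_le_add (mul_le_mul_of_nonneg_left hz ha)
                (mul_le_mul_of_nonneg_left hz' hc)
          _ = η := by ring
      · exact isClosed_le ((A.continuous.comp (continuous_id.sub continuous_const)).norm)
          continuous_const
      · filter_upwards [hpos, hn0.eventually_le_const hη] with δ hδ h
        exact h
    have h2 : ‖A (xs - xh₀)‖ ≤ 0 := by
      by_contra h
      push_neg at h
      linarith [h1 (‖A (xs - xh₀)‖ / 2) (by linarith), h]
    have h3 : A (xs - xh₀) = 0 := norm_le_zero_iff.mp h2
    rw [map_sub, sub_eq_zero] at h3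
    rw [h3, hA0]
  -- R xs ≤ r₀
  have hRxs : R xs ≤ (r₀ : EReal) := by
    refine ereal_le_of_forall_lt fun η hη => ?_
    have hmem : xs ∈ {z : X | R z ≤ ((r₀ + η : ℝ) : EReal)} := by
      refine hmemC _ ?_ ?_ ?_
      · intro z hz z' hz' a c ha hc hac
        simp only [Set.mem_setOf_eq] at *
        have hc' : c = 1 - a := by linarith
        subst hc'
        -- R z and R z' are real
        have hz_top : R z ≠ ⊤ := fun h => (EReal.coe_ne_top _) (top_le_iff.mp (h ▸ hz))
        have hz'_top : R z' ≠ ⊤ := fun h => (EReal.coe_ne_top _) (top_le_iff.mp (h ▸ hz'))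
        set rz := (R z).toReal
        set rz' := (R z').toReal
        have hrz : R z = (rz : EReal) := ((R z).coe_toReal hz_top (hnebot z)).symm
        have hrz' : R z' = (rz' : EReal) := ((R z').coe_toReal hz'_top (hnebot z')).symm
        have hrzle : rz ≤ r₀ + η := by rw [hrz] at hz; exact_mod_cast hz
        have hrz'le : rz' ≤ r₀ + η := by rw [hrz'] at hz'; exact_mod_cast hz'
        calc R (a • z + (1 - a) • z')
            ≤ (a : EReal) * R z + ((1 - a : ℝ) : EReal) * R z' := hconv z z' a ha (by linarith)
          _ = ((a * rz + (1 - a) * rz' : ℝ) : EReal) := by rw [hrz, hrz']; push_cast; ring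
          _ ≤ ((r₀ + η : ℝ) : EReal) := by
              have : a * rz + (1 - a) * rz' ≤ r₀ + η := by nlinarith
              exact_mod_cast this
      · have := hlsc.isClosed_preimage ((r₀ + η : ℝ) : EReal)
        exact this
      · filter_upwards [hpos, hrev η hη] with δ hδ h
        show R (x δ) ≤ ((r₀ + η : ℝ) : EReal)
        rw [hrx δ hδ]
        exact_mod_cast h
    exact hmem
  -- xs ∈ Xhat
  have hxsHat : xs ∈ Xhat := by
    rw [hXhat]
    refine ⟨hAxs, w₀, fun v => ?_⟩
    have h1 : A (v - xs) = A (v - xh₀) := by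
      rw [map_sub, map_sub, hAxs, hA0]
    rw [h1]
    have h2 := hw₀ v
    rw [hr₀] at h2
    calc R xs + ((-⟪w₀, A (v - xh₀)⟫ : ℝ) : EReal)
        ≤ (r₀ : EReal) + ((-⟪w₀, A (v - xh₀)⟫ : ℝ) : EReal) := add_le_add_left hRxs _
      _ ≤ R v := h2
  -- xs is covered by some U xh₁
  obtain ⟨xh₁, hxh₁, hxsU⟩ := Set.mem_iUnion₂.mp (hcover hxsHat)
  obtain ⟨hUnhds, w₁, γ₁, hγ₁, hw₁src, hsemi₁⟩ := hsemi xh₁ hxh₁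
  have hxh₁hat : xh₁ ∈ Xhat := hXtilde hxh₁
  obtain ⟨r₁, hr₁⟩ := hRXhat xh₁ hxh₁hat
  have hxh₁' := hxh₁hat
  rw [hXhat] at hxh₁'
  obtain ⟨hA1, -⟩ := hxh₁'
  -- frequently in U xh₁
  have hfreqU : ∃ᶠ δ in L, x δ ∈ U xh₁ := by
    have hV : toWeakSpace ℝ X '' U xh₁ ∈ 𝓝 (toWeakSpace ℝ X xs) :=
      (hUopen xh₁ hxh₁).mem_nhds (Set.mem_image_of_mem _ hxsU)
    have h1 : ∃ᶠ z in F, z ∈ toWeakSpace ℝ X '' U xh₁ := clusterPt_frequently' hyc hV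
    rw [hF_def, frequently_map] at h1
    refine h1.mono fun δ hδ => ?_
    obtain ⟨z, hz, hz2⟩ := hδ
    rwa [← (toWeakSpace ℝ X).injective hz2]
  -- eventual smallness of the bound
  set W₁ : ℝ := ‖w₁‖ with hW₁_def
  have hεsq : 0 < γ₁ * ε ^ 2 := mul_pos hγ₁ (pow_pos hε 2)
  have hEgood : ∀ᶠ δ in 𝓝[>] (0:ℝ),
      e δ / m δ + (δ ^ 2 / m δ) / (2 * γ₁) + (α δ ^ 2 / m δ) * (W₁ ^ 2 / (2 * γ₁))
        < γ₁ * ε ^ 2 := by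
    have h1 : Tendsto (fun δ => e δ / m δ + (δ ^ 2 / m δ) / (2 * γ₁)
        + (α δ ^ 2 / m δ) * (W₁ ^ 2 / (2 * γ₁))) (𝓝[>] 0) (𝓝 (0 + 0 / (2 * γ₁) + 0 * (W₁ ^ 2 / (2 * γ₁)))) :=
      (hlim3.add (hlim2.div_const _)).add (hlim1.mul_const _)
    simp only [zero_div, zero_mul, add_zero] at h1
    exact h1.eventually_lt_const hεsq
  -- combine to get a contradiction point
  have hev2 : ∀ᶠ δ in L, (0 < δ ∧ δ ∈ S) ∧
      e δ / m δ + (δ ^ 2 / m δ) / (2 * γ₁) + (α δ ^ 2 / m δ) * (W₁ ^ 2 / (2 * γ₁))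
        < γ₁ * ε ^ 2 :=
    ((hpos.filter_mono hLle).and hLS).and (hEgood.filter_mono hLle)
  obtain ⟨δ, hδU, ⟨hδ, hδS⟩, hδE⟩ := (hfreqU.and_eventually hev2).exists
  -- extract real inequalities at δ
  set q := ‖A (x δ) - b δ‖ with hq_def
  set s := ‖A (x δ - xh₁)‖ with hs_def
  set d := infDist (x δ) Xhat with hd_def
  have hsemiR : 2⁻¹ * ‖A xh₁ - b δ‖ ^ 2 + ⟪A xh₁ - b δ - α δ • w₁, A (x δ - xh₁)⟫
      + γ₁ * s ^ 2 + γ₁ * γΔ δ * d ^ 2 + α δ * r₁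
      ≤ 2⁻¹ * q ^ 2 + α δ * r δ := by
    have h1 := hsemi₁ δ hδ (x δ) hδU
    rw [hr₁, hrx δ hδ] at h1
    exact_mod_cast h1
  have haccR := hacc' δ hδ xh₁ hxh₁hat r₁ hr₁
  have hsum : ⟪A xh₁ - b δ - α δ • w₁, A (x δ - xh₁)⟫ + γ₁ * s ^ 2 + γ₁ * γΔ δ * d ^ 2
      ≤ e δ := by linarith
  -- inner product lower bound
  have hnorm1 : ‖A xh₁ - b δ - α δ • w₁‖ ≤ δ + α δ * W₁ := by
    calc ‖A xh₁ - b δ - α δ • w₁‖ ≤ ‖A xh₁ - b δ‖ + ‖α δ • w₁‖ := norm_sub_le _ _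
      _ ≤ δ + α δ * W₁ := by
          rw [norm_smul, Real.norm_of_nonneg (hα δ hδ).le]
          refine add_le_add ?_ le_rfl
          rw [hA1, ← norm_neg]
          simpa using hb δ hδ
  have hip : -((δ + α δ * W₁) * s) ≤ ⟪A xh₁ - b δ - α δ • w₁, A (x δ - xh₁)⟫ := by
    have h1 := abs_real_inner_le_norm (A xh₁ - b δ - α δ • w₁) (A (x δ - xh₁))
    have h2 : ‖A xh₁ - b δ - α δ • w₁‖ * ‖A (x δ - xh₁)‖ ≤ (δ + α δ * W₁) * s :=
      mul_le_mul_of_nonneg_right hnorm1 (norm_nonneg _)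
    have := neg_abs_le ⟪A xh₁ - b δ - α δ • w₁, A (x δ - xh₁)⟫
    linarith
  -- Young's inequality
  have hyoung : (δ + α δ * W₁) * s - γ₁ * s ^ 2 ≤ (δ + α δ * W₁) ^ 2 / (4 * γ₁) := by
    rw [le_div_iff₀ (by linarith : (0:ℝ) < 4 * γ₁)]
    nlinarith [sq_nonneg ((δ + α δ * W₁) - 2 * γ₁ * s)]
  have hexp : (δ + α δ * W₁) ^ 2 ≤ 2 * δ ^ 2 + 2 * α δ ^ 2 * W₁ ^ 2 := by
    nlinarith [sq_nonneg (δ - α δ * W₁)]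
  -- main chain
  have hmain : γ₁ * γΔ δ * d ^ 2 ≤ e δ + δ ^ 2 / (2 * γ₁) + α δ ^ 2 * W₁ ^ 2 / (2 * γ₁) := by
    have h1 : γ₁ * γΔ δ * d ^ 2 ≤ e δ + ((δ + α δ * W₁) * s - γ₁ * s ^ 2) := by linarith
    have h2 : (δ + α δ * W₁) ^ 2 / (4 * γ₁) ≤ (2 * δ ^ 2 + 2 * α δ ^ 2 * W₁ ^ 2) / (4 * γ₁) :=
      div_le_div_of_nonneg_right hexp (by linarith) |>.trans_eq rfl
    have h3 : (2 * δ ^ 2 + 2 * α δ ^ 2 * W₁ ^ 2) / (4 * γ₁)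
        = δ ^ 2 / (2 * γ₁) + α δ ^ 2 * W₁ ^ 2 / (2 * γ₁) := by
      field_simp; ring
    linarith [hyoung, h2, h3 ▸ h2]
  -- the bound rewritten via m
  have hmδ := hm_pos δ hδ
  have hid : e δ + δ ^ 2 / (2 * γ₁) + α δ ^ 2 * W₁ ^ 2 / (2 * γ₁)
      = m δ * (e δ / m δ + (δ ^ 2 / m δ) / (2 * γ₁) + (α δ ^ 2 / m δ) * (W₁ ^ 2 / (2 * γ₁))) := by
    field_simp
  have hbr_nonneg : 0 ≤ e δ / m δ + (δ ^ 2 / m δ) / (2 * γ₁)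
      + (α δ ^ 2 / m δ) * (W₁ ^ 2 / (2 * γ₁)) := by
    have h1 : 0 ≤ e δ / m δ := div_nonneg (he δ hδ) hmδ.le
    have h2 : 0 ≤ (δ ^ 2 / m δ) / (2 * γ₁) :=
      div_nonneg (div_nonneg (sq_nonneg _) hmδ.le) (by linarith)
    have h3 : 0 ≤ (α δ ^ 2 / m δ) * (W₁ ^ 2 / (2 * γ₁)) :=
      mul_nonneg (div_nonneg (sq_nonneg _) hmδ.le)
        (div_nonneg (sq_nonneg _) (by linarith))
    linarith
  have hfinal : γ₁ * γΔ δ * d ^ 2 < γΔ δ * (γ₁ * ε ^ 2) := by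
    calc γ₁ * γΔ δ * d ^ 2
        ≤ m δ * (e δ / m δ + (δ ^ 2 / m δ) / (2 * γ₁) + (α δ ^ 2 / m δ) * (W₁ ^ 2 / (2 * γ₁))) := by
          rw [← hid]; exact hmain
      _ ≤ γΔ δ * (e δ / m δ + (δ ^ 2 / m δ) / (2 * γ₁) + (α δ ^ 2 / m δ) * (W₁ ^ 2 / (2 * γ₁))) :=
          mul_le_mul_of_nonneg_right (hm_le_γ δ) hbr_nonneg
      _ < γΔ δ * (γ₁ * ε ^ 2) := by
          exact mul_lt_mul_of_pos_left hδE (hγΔ δ hδ)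
  have hdge : ε ≤ d := hδS
  have hd2 : ε ^ 2 ≤ d ^ 2 := pow_le_pow_left₀ hε.le hdge 2
  have h9 : 0 ≤ γ₁ * γΔ δ * (d ^ 2 - ε ^ 2) :=
    mul_nonneg (mul_nonneg hγ₁.le (hγΔ δ hδ).le) (by linarith)
  nlinarith [hfinal, h9]
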